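/- arXiv:2603.13260 — 2 statements merged into one kernel-verified Lean document; each statement's English description precedes it below -/
import Mathlib

section
/- For strictly positive probability vectors P and Q on a finite set, the limit as β → 0⁺ of JSD(β)(P‖Q)/β equals KL(P‖Q). -/
/-- Kullback–Leibler divergence between probability vectors on a finite set. -/
noncomputable def klDiv {n : ℕ} (p q : Fin n → ℝ) : ℝ :=
  ∑ i, p i * Real.log (p i / q i)

/-- Generalized Jensen–Shannon divergence. -/
noncomputable def jsd {n : ℕ} (β : ℝ) (P Q : Fin n → ℝ) : ℝ :=
  β * klDiv P (fun i => β * P i + (1 - β) * Q i)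
    + (1 - β) * klDiv Q (fun i => β * P i + (1 - β) * Q i)

/-- For strictly positive probability vectors `P, Q`,
`JSD(β)(P‖Q)/β → KL(P‖Q)` as `β → 0⁺`. -/
theorem jsd_div_beta_tendsto_kl {n : ℕ} (P Q : Fin n → ℝ)
    (hP0 : ∀ i, 0 < P i) (hQ0 : ∀ i, 0 < Q i)
    (hP1 : ∑ i, P i = 1) (hQ1 : ∑ i, Q i = 1) :
    Filter.Tendsto (fun β : ℝ => jsd β P Q / β)
      (nhdsWithin 0 (Set.Ioi 0)) (nhds (klDiv P Q)) := by
  have hQne : ∀ i, Q i ≠ 0 := fun i => (hQ0 i).ne'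
  set M : ℝ → Fin n → ℝ := fun β i => β * P i + (1 - β) * Q i with hM
  -- continuity of the first term
  have hA : Filter.Tendsto (fun β : ℝ => klDiv P (M β)) (nhds 0) (nhds (klDiv P Q)) := by
    have : ∀ i, Filter.Tendsto (fun β : ℝ => P i * Real.log (P i / M β i)) (nhds 0)
        (nhds (P i * Real.log (P i / Q i))) := by
      intro i
      have hden : ContinuousAt (fun β : ℝ => M β i) 0 := by fun_prop
      have hM0 : M 0 i = Q i := by simp [hM]
      have hfrac : ContinuousAt (fun β : ℝ => P i / M β i) 0 := by
        apply continuousAt_const.div hden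
        simp [hM0, hQne i]
      have hlog : ContinuousAt (fun β : ℝ => Real.log (P i / M β i)) 0 := by
        apply (Real.continuousAt_log ?_).comp hfrac
        show P i / M 0 i ≠ 0
        rw [hM0]
        exact (div_pos (hP0 i) (hQ0 i)).ne'
      have hc : ContinuousAt (fun β : ℝ => P i * Real.log (P i / M β i)) 0 :=
        continuousAt_const.mul hlog
      simpa [ContinuousAt, hM0] using hc
    have := Filter.Tendsto.congr (fun β => rfl) (tendsto_finset_sum Finset.univ (fun i _ => this i))
    simpa [klDiv] using this
  -- derivative of the second term at 0 is 0
  have hB : HasDerivAt (fun β : ℝ => klDiv Q (M β)) 0 0 := by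
    have key : ∀ i : Fin n, HasDerivAt (fun β : ℝ => Q i * Real.log (Q i / M β i)) (Q i - P i) 0 := by
      intro i
      have hden : HasDerivAt (fun β : ℝ => M β i) (P i - Q i) 0 := by
        have h1 : HasDerivAt (fun β : ℝ => β * P i) (P i) 0 := by
          simpa using (hasDerivAt_id (0:ℝ)).mul_const (P i)
        have h2 : HasDerivAt (fun β : ℝ => (1 - β) * Q i) (-Q i) 0 := by
          have : HasDerivAt (fun β : ℝ => (1 - β)) (-1) 0 := by
            simpa using (hasDerivAt_id (0:ℝ)).const_sub 1
          simpa using this.mul_const (Q i)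
        simpa [hM, sub_eq_add_neg] using (by have h3 : HasDerivAt (fun β : ℝ => β * P i + (1 - β) * Q i) (P i + -Q i) 0 := h1.add h2; exact h3)
      have hM0 : M 0 i = Q i := by simp [hM]
      have hfrac : HasDerivAt (fun β : ℝ => Q i / M β i)
          ((0 * M 0 i - Q i * (P i - Q i)) / (M 0 i)^2) 0 :=
        (hasDerivAt_const 0 (Q i)).div hden (by simp [hM0, hQne i])
      have hlog : HasDerivAt (fun β : ℝ => Real.log (Q i / M β i))
          (((0 * M 0 i - Q i * (P i - Q i)) / (M 0 i)^2) / (Q i / M 0 i)) 0 := by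
        apply hfrac.log
        rw [hM0]
        exact (div_pos (hQ0 i) (hQ0 i)).ne'
      have := hlog.const_mul (Q i)
      have heq : Q i * (((0 * M 0 i - Q i * (P i - Q i)) / (M 0 i)^2) / (Q i / M 0 i))
          = Q i - P i := by
        rw [hM0, div_self (hQne i), div_one]
        field_simp [hQne i]
        ring
      rwa [heq] at this
    have hsum := HasDerivAt.fun_sum (fun i (_ : i ∈ Finset.univ) => key i)
    have : (∑ i : Fin n, (Q i - P i)) = 0 := by
      rw [Finset.sum_sub_distrib, hP1, hQ1]; ring
    rw [this] at hsum
    simpa [klDiv] using hsum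
  -- value at 0 is 0
  have hF0 : klDiv Q (M 0) = 0 := by
    simp [klDiv, hM, div_self (hQne _)]
  -- slope limit
  have hslope : Filter.Tendsto (fun β : ℝ => klDiv Q (M β) / β)
      (nhdsWithin 0 (Set.Ioi 0)) (nhds 0) := by
    have := (hasDerivAt_iff_tendsto_slope.mp hB).mono_left
      (nhdsWithin_mono 0 (fun x hx => ne_of_gt hx : Set.Ioi (0:ℝ) ⊆ {(0:ℝ)}ᶜ))
    apply this.congr
    intro β
    simp [slope, hF0, div_eq_inv_mul]
  -- combine
  have hβ1 : Filter.Tendsto (fun β : ℝ => (1 - β)) (nhdsWithin 0 (Set.Ioi 0)) (nhds 1) := by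
    have : Filter.Tendsto (fun β : ℝ => (1 - β)) (nhds 0) (nhds 1) := by
      have h3 : Filter.Tendsto (fun β : ℝ => 1 - β) (nhds 0) (nhds (1 - 0)) := (continuous_const.sub continuous_id).tendsto (0:ℝ); simpa using h3
    exact this.mono_left nhdsWithin_le_nhds
  have hAin := hA.mono_left (nhdsWithin_le_nhds (s := Set.Ioi (0:ℝ)))
  have hcomb := hAin.add (hβ1.mul hslope)
  have : Filter.Tendsto (fun β : ℝ => klDiv P (M β) + (1 - β) * (klDiv Q (M β) / β))
      (nhdsWithin 0 (Set.Ioi 0)) (nhds (klDiv P Q)) := by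
    simpa using hcomb
  apply this.congr'
  filter_upwards [self_mem_nhdsWithin] with β (hβ : (0:ℝ) < β)
  have hβne : β ≠ 0 := ne_of_gt hβ
  simp only [jsd, hM]
  field_simp
end

section
/- Let π be a permutation of {1,…,k} and z[1] ≥ z[2] ≥ … ≥ z[k] real scores sorted in descending order. The Plackett–Luce probability P_PL(π) with these scores is maximized over permutations when π is the identity, i.e., the ranking consistent with the descending order of scores. -/
open Finset in
/-- Plackett–Luce probability of a permutation `π` of `k` items with scores `z`. -/
noncomputable def plackettLuce {k : ℕ} (z : Fin k → ℝ) (π : Equiv.Perm (Fin k)) : ℝ :=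
  ∏ j : Fin k, Real.exp (z (π j)) /
    ∑ ℓ ∈ Finset.univ.filter (fun ℓ => j ≤ ℓ), Real.exp (z (π ℓ))

open Finset in
/-- The tail sum of `exp ∘ z` is the minimal sum over subsets of the same cardinality,
when `z` is descending. -/
lemma sum_exp_tail_le {k : ℕ} (z : Fin k → ℝ)
    (hz : ∀ i j : Fin k, i ≤ j → z j ≤ z i) (j : Fin k)
    (T : Finset (Fin k)) (hT : T.card = (univ.filter (fun ℓ => j ≤ ℓ)).card) :
    ∑ ℓ ∈ univ.filter (fun ℓ => j ≤ ℓ), Real.exp (z ℓ) ≤ ∑ i ∈ T, Real.exp (z i) := by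
  set A := univ.filter (fun ℓ : Fin k => j ≤ ℓ) with hA
  have h1 : ∑ ℓ ∈ A ∩ T, Real.exp (z ℓ) + ∑ ℓ ∈ A \ T, Real.exp (z ℓ)
      = ∑ ℓ ∈ A, Real.exp (z ℓ) := Finset.sum_inter_add_sum_sdiff A T _
  have h2 : ∑ ℓ ∈ T ∩ A, Real.exp (z ℓ) + ∑ ℓ ∈ T \ A, Real.exp (z ℓ)
      = ∑ ℓ ∈ T, Real.exp (z ℓ) := Finset.sum_inter_add_sum_sdiff T A _
  have hcard : (A \ T).card = (T \ A).card := by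
    rw [Finset.card_sdiff_comm hT.symm]
  have e : (A \ T : Finset (Fin k)) ≃ (T \ A : Finset (Fin k)) :=
    Finset.equivOfCardEq hcard
  have key : ∑ ℓ ∈ A \ T, Real.exp (z ℓ) ≤ ∑ ℓ ∈ T \ A, Real.exp (z ℓ) := by
    rw [← Finset.sum_coe_sort (A \ T), ← Finset.sum_coe_sort (T \ A),
      ← Equiv.sum_comp e (fun b => Real.exp (z b.1))]
    apply Finset.sum_le_sum
    intro a _
    have ha : (a : Fin k) ∈ A \ T := a.2
    have hb : ((e a : _) : Fin k) ∈ T \ A := (e a).2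
    have haj : j ≤ (a : Fin k) := by
      have := (Finset.mem_sdiff.mp ha).1
      simpa [hA] using this
    have hbj : ¬ j ≤ ((e a : _) : Fin k) := by
      have := (Finset.mem_sdiff.mp hb).2
      simpa [hA] using this
    have : ((e a : _) : Fin k) ≤ (a : Fin k) := le_trans (le_of_not_ge hbj) haj
    exact Real.exp_le_exp.mpr (hz _ _ this)
  have := add_le_add (le_refl (∑ ℓ ∈ A ∩ T, Real.exp (z ℓ))) key
  rw [h1] at this
  calc ∑ ℓ ∈ A, Real.exp (z ℓ)
      ≤ ∑ ℓ ∈ A ∩ T, Real.exp (z ℓ) + ∑ ℓ ∈ T \ A, Real.exp (z ℓ) := this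
    _ = ∑ ℓ ∈ T, Real.exp (z ℓ) := by rw [Finset.inter_comm]; exact h2

open Finset in
/-- For scores sorted in descending order, the Plackett–Luce probability is maximized by
the identity permutation (the ranking consistent with the descending order). -/
theorem plackettLuce_max_at_identity (k : ℕ) (z : Fin k → ℝ)
    (hz : ∀ i j : Fin k, i ≤ j → z j ≤ z i) (π : Equiv.Perm (Fin k)) :
    plackettLuce z π ≤ plackettLuce z (1 : Equiv.Perm (Fin k)) := by
  have hpos : ∀ (σ : Equiv.Perm (Fin k)) (j : Fin k),
      0 < ∑ ℓ ∈ univ.filter (fun ℓ => j ≤ ℓ), Real.exp (z (σ ℓ)) := by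
    intro σ j
    apply Finset.sum_pos (fun i _ => Real.exp_pos _)
    exact ⟨j, by simp⟩
  unfold plackettLuce
  rw [Finset.prod_div_distrib, Finset.prod_div_distrib]
  have hnum : ∏ j : Fin k, Real.exp (z (π j)) = ∏ j : Fin k, Real.exp (z ((1 : Equiv.Perm (Fin k)) j)) := by
    simpa using Equiv.prod_comp π (fun i => Real.exp (z i))
  rw [hnum]
  have hden : ∀ j : Fin k,
      ∑ ℓ ∈ univ.filter (fun ℓ => j ≤ ℓ), Real.exp (z ((1 : Equiv.Perm (Fin k)) ℓ))
      ≤ ∑ ℓ ∈ univ.filter (fun ℓ => j ≤ ℓ), Real.exp (z (π ℓ)) := by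
    intro j
    have himg : ∑ ℓ ∈ univ.filter (fun ℓ => j ≤ ℓ), Real.exp (z (π ℓ))
        = ∑ i ∈ (univ.filter (fun ℓ => j ≤ ℓ)).image π, Real.exp (z i) :=
      (Finset.sum_image (f := fun i => Real.exp (z i)) (g := ⇑π) (fun x _ y _ h => π.injective h)).symm
    rw [himg]
    simp only [Equiv.Perm.one_apply]
    exact sum_exp_tail_le z hz j _
      (Finset.card_image_of_injective _ π.injective)
  have hDpos : 0 < ∏ j : Fin k, ∑ ℓ ∈ univ.filter (fun ℓ => j ≤ ℓ),
      Real.exp (z ((1 : Equiv.Perm (Fin k)) ℓ)) :=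
    Finset.prod_pos (fun j _ => hpos 1 j)
  have hD : ∏ j : Fin k, ∑ ℓ ∈ univ.filter (fun ℓ => j ≤ ℓ),
        Real.exp (z ((1 : Equiv.Perm (Fin k)) ℓ))
      ≤ ∏ j : Fin k, ∑ ℓ ∈ univ.filter (fun ℓ => j ≤ ℓ), Real.exp (z (π ℓ)) :=
    Finset.prod_le_prod (fun j _ => le_of_lt (hpos 1 j)) (fun j _ => hden j)
  have hNpos : 0 ≤ ∏ j : Fin k, Real.exp (z ((1 : Equiv.Perm (Fin k)) j)) :=
    le_of_lt (Finset.prod_pos (fun j _ => Real.exp_pos _))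
  gcongr
end
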